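/- Let X and Y be finite types and N ≥ 1. Let γX : X → ℝ and γY : Y → ℝ be nonnegative unnormalised densities, L : Y → X → ℝ a nonnegative backward kernel, and K : X → Y → ℝ a nonnegative proposal kernel. Define Q(x, y) := γY(y) L(y, x) / γX(x) for γX(x) > 0 and the weight function w(x, y) := γY(y) L(y, x) / (γX(x) K(x, y)) whenever γX(x) > 0 and K(x, y) > 0. Let ξ : Fin N → X be particles with γX(ξ_i) > 0 for all i, and ω : Fin N → ℝ strictly positive weights, and suppose Z := ∑_{ℓ} ω_ℓ · (∑_{y'} Q(ξ_ℓ, y')) > 0. Define the extended target η̌(i, y) := ω_i Q(ξ_i, y) / Z on Fin N × Y and the proposal ρ(i, y) := (ω_i / ∑_ℓ ω_ℓ) · K(ξ_i, y). Then for every (i, y) with ρ(i, y) > 0, η̌(i, y) / ρ(i, y) = c · w(ξ_i, y), where the constant c = (∑_ℓ ω_ℓ) / Z does not depend on (i, y). Hence the importance weight function w is, up to a normalising constant, the Radon–Nikodym derivative of the extended target mixture with respect to the mixture proposal. -/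

import Mathlib

/-- Correctness of the SMC importance weights: the Radon–Nikodym derivative of the
extended target mixture `η̌(i, y) = ω_i Q(ξ_i, y) / Z` with respect to the mixture
proposal `ρ(i, y) = (ω_i / Ω) K(ξ_i, y)` equals, up to the constant `Ω / Z` not
depending on `(i, y)`, the weight function
`w(x, y) = γY(y) L(y, x) / (γX(x) K(x, y))`. -/
theorem smc_importance_weights_correct
    {X Y : Type} [Fintype X] [Fintype Y] (N : ℕ) (hN : 1 ≤ N)
    (γX : X → ℝ) (γY : Y → ℝ) (L : Y → X → ℝ) (K : X → Y → ℝ)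
    (hγX : ∀ x, 0 ≤ γX x) (hγY : ∀ y, 0 ≤ γY y)
    (hL : ∀ y x, 0 ≤ L y x) (hK : ∀ x y, 0 ≤ K x y)
    (Q : X → Y → ℝ)
    (hQ : ∀ x y, Q x y = if 0 < γX x then γY y * L y x / γX x else 0)
    (w : X → Y → ℝ)
    (hw : ∀ x y, 0 < γX x → 0 < K x y → w x y = γY y * L y x / (γX x * K x y))
    (ξ : Fin N → X) (hξ : ∀ i, 0 < γX (ξ i))
    (ω : Fin N → ℝ) (hω : ∀ i, 0 < ω i)
    (Z : ℝ) (hZdef : Z = ∑ ℓ : Fin N, ω ℓ * ∑ y' : Y, Q (ξ ℓ) y') (hZ : 0 < Z)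
    (ηc : Fin N × Y → ℝ)
    (hηc : ∀ (i : Fin N) (y : Y), ηc (i, y) = ω i * Q (ξ i) y / Z)
    (ρ : Fin N × Y → ℝ)
    (hρ : ∀ (i : Fin N) (y : Y), ρ (i, y) = (ω i / ∑ ℓ : Fin N, ω ℓ) * K (ξ i) y) :
    ∀ (i : Fin N) (y : Y), 0 < ρ (i, y) →
      ηc (i, y) / ρ (i, y) = ((∑ ℓ : Fin N, ω ℓ) / Z) * w (ξ i) y := by
  intro i y hpos
  have hΩ : 0 < ∑ ℓ : Fin N, ω ℓ := Finset.sum_pos (fun ℓ _ => hω ℓ) ⟨i, Finset.mem_univ i⟩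
  have hKpos : 0 < K (ξ i) y := by
    by_contra h
    have hK0 : K (ξ i) y = 0 := le_antisymm (not_lt.mp h) (hK _ _)
    rw [hρ, hK0, mul_zero] at hpos
    exact lt_irrefl 0 hpos
  rw [hηc, hρ, hQ, if_pos (hξ i), hw _ _ (hξ i) hKpos]
  field_simp [(hω i).ne', (hξ i).ne', hKpos.ne', hZ.ne']
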